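/- arXiv:2503.12305 — 4 statements merged into one kernel-verified Lean document; each statement's English description precedes it below -/
import Mathlib

section
/- Let T > 0; let m, Im, X_max ∈ ℝ; let c1 > 0, c2 ∈ ℝ, and set κ = 1/(1+c1). Let α, σ, M : ℝ → ℝ be functions of time. Suppose P1,…,P6 : ℝ → ℝ are differentiable on [0,T] and satisfy, for every t ∈ [0,T]: P1'(t) + c2 − κ·P1(t)^2 = 0; P2'(t) − α(t)·P2(t) − κ·P1(t)·P2(t) + 2κ·P1(t) = 0; P3'(t) + (1−κ) − (2α(t) + σ(t)^2)·P3(t) + κ·P2(t) − (κ/4)·P2(t)^2 = 0; P4'(t) + 2κ·(m − M(t))·P1(t) − κ·P1(t)·P4(t) = 0; P5'(t) + 2(1−κ)(m − M(t)) − α(t)·P5(t) + κ·P4(t) + κ(m − M(t))·P2(t) − (κ/2)·P2(t)·P4(t) + σ(t)^2·(X_max − 2m)·P3(t) = 0; P6'(t) + (1−κ)(m − M(t))^2 + κ(m − M(t))·P4(t) − (κ/4)·P4(t)^2 + σ(t)^2·m·(X_max − m)·P3(t) = 0. Define V̄(t,x,ι) = P1(t)(ι − Im)^2 + P2(t)(ι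 − Im)(x − m) + P3(t)(x − m)^2 + P4(t)(ι − Im) + P5(t)(x − m) + P6(t). Then V̄ is differentiable in t, twice differentiable in x, differentiable in ι, and for all t ∈ [0,T] and all x, ι ∈ ℝ: ∂_t V̄(t,x,ι) + (1−κ)(x − M(t))^2 + c2·(ι − Im)^2 − α(t)(x − m)·∂_x V̄(t,x,ι) + κ(x − M(t))·∂_ι V̄(t,x,ι) − (κ/4)·(∂_ι V̄(t,x,ι))^2 + (1/2)·σ(t)^2·x·(X_max − x)·∂_{xx} V̄(t,x,ι) = 0. -/
/-- Verification step of Proposition 1: if `P1,…,P6` solve the backward Riccati ODE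
system on `[0,T]`, then the quadratic ansatz `V̄` is smooth in each variable and
satisfies the reduced semilinear HJB PDE. -/
theorem ansatz_solves_reduced_HJB (T m Im Xmax c1 c2 κ : ℝ) (hT : 0 < T)
    (hc1 : 0 < c1) (hκ : κ = 1 / (1 + c1))
    (α σ M : ℝ → ℝ) (P1 P2 P3 P4 P5 P6 : ℝ → ℝ)
    (h1 : ∀ t ∈ Set.Icc (0 : ℝ) T,
      HasDerivAt P1 (κ * P1 t ^ 2 - c2) t)
    (h2 : ∀ t ∈ Set.Icc (0 : ℝ) T,
      HasDerivAt P2 (α t * P2 t + κ * P1 t * P2 t - 2 * κ * P1 t) t)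
    (h3 : ∀ t ∈ Set.Icc (0 : ℝ) T,
      HasDerivAt P3 (-(1 - κ) + (2 * α t + σ t ^ 2) * P3 t - κ * P2 t + κ / 4 * P2 t ^ 2) t)
    (h4 : ∀ t ∈ Set.Icc (0 : ℝ) T,
      HasDerivAt P4 (-(2 * κ * (m - M t) * P1 t) + κ * P1 t * P4 t) t)
    (h5 : ∀ t ∈ Set.Icc (0 : ℝ) T,
      HasDerivAt P5 (-(2 * (1 - κ) * (m - M t)) + α t * P5 t - κ * P4 t
        - κ * (m - M t) * P2 t + κ / 2 * P2 t * P4 t - σ t ^ 2 * (Xmax - 2 * m) * P3 t) t)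
    (h6 : ∀ t ∈ Set.Icc (0 : ℝ) T,
      HasDerivAt P6 (-((1 - κ) * (m - M t) ^ 2) - κ * (m - M t) * P4 t + κ / 4 * P4 t ^ 2
        - σ t ^ 2 * m * (Xmax - m) * P3 t) t) :
    let V : ℝ → ℝ → ℝ → ℝ := fun t x ι =>
      P1 t * (ι - Im) ^ 2 + P2 t * (ι - Im) * (x - m) + P3 t * (x - m) ^ 2 +
        P4 t * (ι - Im) + P5 t * (x - m) + P6 t
    ∀ t ∈ Set.Icc (0 : ℝ) T, ∀ x ι : ℝ,
      (DifferentiableAt ℝ (fun s => V s x ι) t ∧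
        DifferentiableAt ℝ (fun y => V t y ι) x ∧
        DifferentiableAt ℝ (deriv fun y => V t y ι) x ∧
        DifferentiableAt ℝ (fun j => V t x j) ι) ∧
      deriv (fun s => V s x ι) t + (1 - κ) * (x - M t) ^ 2 + c2 * (ι - Im) ^ 2
        - α t * (x - m) * deriv (fun y => V t y ι) x
        + κ * (x - M t) * deriv (fun j => V t x j) ι
        - κ / 4 * (deriv (fun j => V t x j) ι) ^ 2
        + 1 / 2 * σ t ^ 2 * x * (Xmax - x) * deriv (deriv fun y => V t y ι) x = 0 := by
  intro V t ht x ι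
  have hd1 := h1 t ht
  have hd2 := h2 t ht
  have hd3 := h3 t ht
  have hd4 := h4 t ht
  have hd5 := h5 t ht
  have hd6 := h6 t ht
  -- derivative in t
  have hVt : HasDerivAt (fun s => V s x ι)
      ((κ * P1 t ^ 2 - c2) * (ι - Im) ^ 2
        + (α t * P2 t + κ * P1 t * P2 t - 2 * κ * P1 t) * (ι - Im) * (x - m)
        + (-(1 - κ) + (2 * α t + σ t ^ 2) * P3 t - κ * P2 t + κ / 4 * P2 t ^ 2) * (x - m) ^ 2
        + (-(2 * κ * (m - M t) * P1 t) + κ * P1 t * P4 t) * (ι - Im)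
        + (-(2 * (1 - κ) * (m - M t)) + α t * P5 t - κ * P4 t
            - κ * (m - M t) * P2 t + κ / 2 * P2 t * P4 t - σ t ^ 2 * (Xmax - 2 * m) * P3 t) * (x - m)
        + (-((1 - κ) * (m - M t) ^ 2) - κ * (m - M t) * P4 t + κ / 4 * P4 t ^ 2
            - σ t ^ 2 * m * (Xmax - m) * P3 t)) t := by
    exact (((((hd1.mul_const _).add ((hd2.mul_const _).mul_const _)).add
      (hd3.mul_const _)).add (hd4.mul_const _)).add (hd5.mul_const _)).add hd6
  -- derivative in x
  have hVx : ∀ y : ℝ, HasDerivAt (fun y => V t y ι)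
      (P2 t * (ι - Im) + 2 * P3 t * (y - m) + P5 t) y := by
    intro y
    have hy : HasDerivAt (fun y : ℝ => y - m) 1 y := (hasDerivAt_id y).sub_const m
    have hy2 : HasDerivAt (fun y : ℝ => (y - m) ^ 2) (2 * (y - m)) y := by
      simpa using hy.fun_pow 2
    have := (((((hasDerivAt_const y (P1 t * (ι - Im) ^ 2)).fun_add
      (hy.const_mul (P2 t * (ι - Im)))).fun_add (hy2.const_mul (P3 t))).fun_add
      (hasDerivAt_const y (P4 t * (ι - Im)))).fun_add (hy.const_mul (P5 t))).fun_add
      (hasDerivAt_const y (P6 t))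
    exact this.congr_deriv (by ring)
  have hderivx : (deriv fun y => V t y ι) =
      fun y => P2 t * (ι - Im) + 2 * P3 t * (y - m) + P5 t :=
    funext fun y => (hVx y).deriv
  have hVxx : HasDerivAt (deriv fun y => V t y ι) (2 * P3 t) x := by
    rw [hderivx]
    have := ((hasDerivAt_const x (P2 t * (ι - Im))).fun_add
      ((((hasDerivAt_id x).sub_const m).const_mul (2 * P3 t)))).fun_add
      (hasDerivAt_const x (P5 t))
    exact this.congr_deriv (by ring)
  -- derivative in ι
  have hVi : HasDerivAt (fun j => V t x j)
      (2 * P1 t * (ι - Im) + P2 t * (x - m) + P4 t) ι := by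
    have hj : HasDerivAt (fun j : ℝ => j - Im) 1 ι := (hasDerivAt_id ι).sub_const Im
    have hj2 : HasDerivAt (fun j : ℝ => (j - Im) ^ 2) (2 * (ι - Im)) ι := by
      simpa using hj.fun_pow 2
    have := (((((hj2.const_mul (P1 t)).fun_add
      ((hj.const_mul (P2 t)).mul_const (x - m))).fun_add
      (hasDerivAt_const ι (P3 t * (x - m) ^ 2))).fun_add
      (hj.const_mul (P4 t))).fun_add (hasDerivAt_const ι (P5 t * (x - m)))).fun_add
      (hasDerivAt_const ι (P6 t))
    exact this.congr_deriv (by ring)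
  refine ⟨⟨hVt.differentiableAt, (hVx x).differentiableAt, hVxx.differentiableAt,
    hVi.differentiableAt⟩, ?_⟩
  rw [hVt.deriv, (hVx x).deriv, hVi.deriv, hVxx.deriv]
  ring
end

section
/- Under the hypotheses of the previous verification statement (T > 0; m, Im, X_max ∈ ℝ; c1 > 0; c2 ∈ ℝ; κ = 1/(1+c1); α, σ, M : ℝ → ℝ; P1,…,P6 differentiable on [0,T] solving the backward Riccati system with the P6 equation including the term σ(t)^2·m·(X_max − m)·P3(t); and V̄ the quadratic ansatz), the function V̄ satisfies the unconstrained Hamilton–Jacobi–Bellman equation: for all t ∈ [0,T] and x, ι ∈ ℝ, ∂_t V̄(t,x,ι) + inf_{b ∈ ℝ} { α(t)(m − x)·∂_x V̄(t,x,ι) + b·∂_ι V̄(t,x,ι) + (1/2)σ(t)^2·x·(X_max − x)·∂_{xx} V̄(t,x,ι) + (x − b − M(t))^2 + c1·b^2 + c2·(ι − Im)^2 } = 0, where the infimum over b ∈ ℝ is attained. -/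
private lemma aux_min_HJB (c1 a c d x Mt r b b0 : ℝ) (hc : 0 < 1 + c1)
    (hb0 : b0 = (2 * (x - Mt) - r) / (2 * (1 + c1))) :
    a + b0 * r + c + (x - b0 - Mt) ^ 2 + c1 * b0 ^ 2 + d ≤
      a + b * r + c + (x - b - Mt) ^ 2 + c1 * b ^ 2 + d := by
  have hne : (1 + c1 : ℝ) ≠ 0 := ne_of_gt hc
  have key : (a + b * r + c + (x - b - Mt) ^ 2 + c1 * b ^ 2 + d)
      - (a + b0 * r + c + (x - b0 - Mt) ^ 2 + c1 * b0 ^ 2 + d)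
      = (1 + c1) * (b - b0) ^ 2 := by
    subst hb0
    field_simp
    ring
  nlinarith [mul_nonneg hc.le (sq_nonneg (b - b0)), key]

/-- Proposition 1 (PDE content): under the Riccati ODE hypotheses, the quadratic ansatz
`V̄` satisfies the unconstrained HJB equation
`∂_t V̄ + inf_{b∈ℝ} {α(m−x)∂_x V̄ + b ∂_ι V̄ + ½σ²x(Xmax−x)∂_{xx}V̄ + (x−b−M)² + c1 b² + c2(ι−Im)²} = 0`,
the infimum over `b ∈ ℝ` being attained. -/
theorem ansatz_solves_unconstrained_HJB (T m Im Xmax c1 c2 κ : ℝ) (hT : 0 < T)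
    (hc1 : 0 < c1) (hκ : κ = 1 / (1 + c1))
    (α σ M : ℝ → ℝ) (P1 P2 P3 P4 P5 P6 : ℝ → ℝ)
    (h1 : ∀ t ∈ Set.Icc (0 : ℝ) T,
      HasDerivAt P1 (κ * P1 t ^ 2 - c2) t)
    (h2 : ∀ t ∈ Set.Icc (0 : ℝ) T,
      HasDerivAt P2 (α t * P2 t + κ * P1 t * P2 t - 2 * κ * P1 t) t)
    (h3 : ∀ t ∈ Set.Icc (0 : ℝ) T,
      HasDerivAt P3 (-(1 - κ) + (2 * α t + σ t ^ 2) * P3 t - κ * P2 t + κ / 4 * P2 t ^ 2) t)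
    (h4 : ∀ t ∈ Set.Icc (0 : ℝ) T,
      HasDerivAt P4 (-(2 * κ * (m - M t) * P1 t) + κ * P1 t * P4 t) t)
    (h5 : ∀ t ∈ Set.Icc (0 : ℝ) T,
      HasDerivAt P5 (-(2 * (1 - κ) * (m - M t)) + α t * P5 t - κ * P4 t
        - κ * (m - M t) * P2 t + κ / 2 * P2 t * P4 t - σ t ^ 2 * (Xmax - 2 * m) * P3 t) t)
    (h6 : ∀ t ∈ Set.Icc (0 : ℝ) T,
      HasDerivAt P6 (-((1 - κ) * (m - M t) ^ 2) - κ * (m - M t) * P4 t + κ / 4 * P4 t ^ 2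
        - σ t ^ 2 * m * (Xmax - m) * P3 t) t) :
    let V : ℝ → ℝ → ℝ → ℝ := fun t x ι =>
      P1 t * (ι - Im) ^ 2 + P2 t * (ι - Im) * (x - m) + P3 t * (x - m) ^ 2 +
        P4 t * (ι - Im) + P5 t * (x - m) + P6 t
    ∀ t ∈ Set.Icc (0 : ℝ) T, ∀ x ι : ℝ,
      ∃ v : ℝ,
        IsLeast (Set.range fun b : ℝ =>
          α t * (m - x) * deriv (fun y => V t y ι) x
            + b * deriv (fun j => V t x j) ι
            + 1 / 2 * σ t ^ 2 * x * (Xmax - x) * deriv (deriv fun y => V t y ι) x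
            + (x - b - M t) ^ 2 + c1 * b ^ 2 + c2 * (ι - Im) ^ 2) v ∧
        deriv (fun s => V s x ι) t + v = 0 := by
  have hc' : (0:ℝ) < 1 + c1 := by linarith
  have hcne : (1 + c1 : ℝ) ≠ 0 := ne_of_gt hc'
  subst hκ
  intro V t ht x ι
  -- x-derivative
  have hx0 : ∀ y : ℝ, HasDerivAt (fun y => V t y ι)
      (P2 t * (ι - Im) + 2 * P3 t * (y - m) + P5 t) y := by
    intro y
    have h : HasDerivAt (fun y : ℝ => y - m) 1 y := (hasDerivAt_id y).sub_const m
    have h' := (((((h.const_mul (P2 t * (ι - Im))).const_add (P1 t * (ι - Im) ^ 2)).add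
      ((h.pow 2).const_mul (P3 t))).add_const (P4 t * (ι - Im))).add
      (h.const_mul (P5 t))).add_const (P6 t)
    refine h'.congr_deriv ?_
    push_cast
    ring
  have hVx : deriv (fun y => V t y ι) x = P2 t * (ι - Im) + 2 * P3 t * (x - m) + P5 t :=
    (hx0 x).deriv
  have hdd : deriv (fun y => V t y ι) =
      fun y => P2 t * (ι - Im) + 2 * P3 t * (y - m) + P5 t :=
    funext fun y => (hx0 y).deriv
  have hVxx : deriv (deriv (fun y => V t y ι)) x = 2 * P3 t := by
    rw [hdd]
    have h : HasDerivAt (fun y : ℝ => P2 t * (ι - Im) + 2 * P3 t * (y - m) + P5 t)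
        (2 * P3 t) x := by
      have h0 : HasDerivAt (fun y : ℝ => y - m) 1 x := (hasDerivAt_id x).sub_const m
      have h' := ((h0.const_mul (2 * P3 t)).const_add (P2 t * (ι - Im))).add_const (P5 t)
      refine h'.congr_deriv ?_
      ring
    exact h.deriv
  -- ι-derivative
  have hVι : deriv (fun j => V t x j) ι =
      2 * P1 t * (ι - Im) + P2 t * (x - m) + P4 t := by
    have h : HasDerivAt (fun j : ℝ => j - Im) 1 ι := (hasDerivAt_id ι).sub_const Im
    have h' := (((((((h.pow 2).const_mul (P1 t)).add
      ((h.const_mul (P2 t)).mul_const (x - m))).add_const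
      (P3 t * (x - m) ^ 2)).add (h.const_mul (P4 t))).add_const
      (P5 t * (x - m))).add_const (P6 t))
    have h'' : HasDerivAt (fun j => V t x j)
        (2 * P1 t * (ι - Im) + P2 t * (x - m) + P4 t) ι := by
      refine h'.congr_deriv ?_
      push_cast
      ring
    exact h''.deriv
  -- time derivative
  have hVt : deriv (fun s => V s x ι) t =
      ((1/(1+c1)) * P1 t ^ 2 - c2) * (ι - Im) ^ 2
      + (α t * P2 t + (1/(1+c1)) * P1 t * P2 t - 2 * (1/(1+c1)) * P1 t) * (ι - Im) * (x - m)
      + (-(1 - (1/(1+c1))) + (2 * α t + σ t ^ 2) * P3 t - (1/(1+c1)) * P2 t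
          + (1/(1+c1)) / 4 * P2 t ^ 2) * (x - m) ^ 2
      + (-(2 * (1/(1+c1)) * (m - M t) * P1 t) + (1/(1+c1)) * P1 t * P4 t) * (ι - Im)
      + (-(2 * (1 - (1/(1+c1))) * (m - M t)) + α t * P5 t - (1/(1+c1)) * P4 t
          - (1/(1+c1)) * (m - M t) * P2 t + (1/(1+c1)) / 2 * P2 t * P4 t
          - σ t ^ 2 * (Xmax - 2 * m) * P3 t) * (x - m)
      + (-((1 - (1/(1+c1))) * (m - M t) ^ 2) - (1/(1+c1)) * (m - M t) * P4 t
          + (1/(1+c1)) / 4 * P4 t ^ 2 - σ t ^ 2 * m * (Xmax - m) * P3 t) := by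
    have h' := ((((((h1 t ht).mul_const ((ι - Im) ^ 2)).add
      (((h2 t ht).mul_const (ι - Im)).mul_const (x - m))).add
      ((h3 t ht).mul_const ((x - m) ^ 2))).add
      ((h4 t ht).mul_const (ι - Im))).add
      ((h5 t ht).mul_const (x - m))).add (h6 t ht)
    exact h'.deriv
  rw [hVx, hVι, hVxx, hVt]
  refine ⟨_, ⟨⟨(2 * (x - M t) - (2 * P1 t * (ι - Im) + P2 t * (x - m) + P4 t)) /
      (2 * (1 + c1)), rfl⟩, ?_⟩, ?_⟩
  · rintro y ⟨b, rfl⟩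
    exact aux_min_HJB c1 _ _ _ x (M t) _ b _ hc' rfl
  · show _ + _ = (0:ℝ)
    field_simp
    ring
end

section
/- Let T > 0, κ > 0, c2 ≥ 0, and 𝒫 ≥ 0. Then there exists a unique differentiable function P1 : [0,T] → ℝ satisfying P1'(t) = κ·P1(t)^2 − c2 for all t ∈ [0,T] and P1(T) = 𝒫. Moreover, for all t ∈ [0,T], min(𝒫, √(c2/κ)) ≤ P1(t) ≤ max(𝒫, √(c2/κ)); in particular P1(t) ≥ 0 on [0,T]. -/
open Set Real

private lemma riccati_lipOn (κ c2 M : ℝ) (hκ : 0 ≤ κ) (hM : 0 ≤ M) :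
    LipschitzOnWith (Real.toNNReal (2 * κ * M)) (fun x => κ * x ^ 2 - c2)
      (Set.Icc (-M) M) := by
  rw [lipschitzOnWith_iff_dist_le_mul]
  intro x hx y hy
  rw [Real.dist_eq, Real.dist_eq]
  rw [Real.coe_toNNReal _ (show (0:ℝ) ≤ 2 * κ * M by positivity)]
  have h1 : (κ * x ^ 2 - c2) - (κ * y ^ 2 - c2) = κ * (x + y) * (x - y) := by ring
  rw [h1, abs_mul, abs_mul, abs_of_nonneg hκ]
  have hxy : |x + y| ≤ 2 * M := by
    calc |x + y| ≤ |x| + |y| := abs_add_le _ _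
    _ ≤ M + M := add_le_add (abs_le.2 ⟨hx.1, hx.2⟩) (abs_le.2 ⟨hy.1, hy.2⟩)
    _ = 2 * M := by ring
  calc κ * |x + y| * |x - y| ≤ κ * (2 * M) * |x - y| := by
        apply mul_le_mul_of_nonneg_right (mul_le_mul_of_nonneg_left hxy hκ) (abs_nonneg _)
    _ = 2 * κ * M * |x - y| := by ring

private lemma riccati_unique_aux (T κ c2 : ℝ) (hκ : 0 ≤ κ) (P Q : ℝ → ℝ)
    (hP : ∀ t ∈ Set.Icc (0 : ℝ) T, HasDerivAt P (κ * P t ^ 2 - c2) t)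
    (hQ : ∀ t ∈ Set.Icc (0 : ℝ) T, HasDerivAt Q (κ * Q t ^ 2 - c2) t)
    (hPQ : P T = Q T) : Set.EqOn P Q (Set.Icc 0 T) := by
  have hPc : ContinuousOn P (Set.Icc 0 T) := fun t ht =>
    (hP t ht).continuousAt.continuousWithinAt
  have hQc : ContinuousOn Q (Set.Icc 0 T) := fun t ht =>
    (hQ t ht).continuousAt.continuousWithinAt
  obtain ⟨C1, hC1⟩ := isCompact_Icc.exists_bound_of_continuousOn hPc
  obtain ⟨C2, hC2⟩ := isCompact_Icc.exists_bound_of_continuousOn hQc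
  set M : ℝ := max C1 (max C2 0) with hM
  have hM0 : 0 ≤ M := le_trans (le_max_right _ _) (le_max_right _ _)
  have hPm : ∀ t ∈ Set.Icc (0:ℝ) T, P t ∈ Set.Icc (-M) M := by
    intro t ht
    have := (hC1 t ht).trans (le_max_left C1 (max C2 0))
    rw [Real.norm_eq_abs, abs_le] at this
    exact this
  have hQm : ∀ t ∈ Set.Icc (0:ℝ) T, Q t ∈ Set.Icc (-M) M := by
    intro t ht
    have := (hC2 t ht).trans ((le_max_left C2 0).trans (le_max_right C1 (max C2 0)))
    rw [Real.norm_eq_abs, abs_le] at this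
    exact this
  exact ODE_solution_unique_of_mem_Icc_left
    (v := fun _ x => κ * x ^ 2 - c2) (s := fun _ => Set.Icc (-M) M)
    (fun _ _ => riccati_lipOn κ c2 M hκ hM0)
    hPc (fun t ht => (hP t (Set.Ioc_subset_Icc_self ht)).hasDerivWithinAt)
    (fun t ht => hPm t (Set.Ioc_subset_Icc_self ht))
    hQc (fun t ht => (hQ t (Set.Ioc_subset_Icc_self ht)).hasDerivWithinAt)
    (fun t ht => hQm t (Set.Ioc_subset_Icc_self ht))
    hPQ

/-- The scalar terminal-value Riccati problem `P1' = κ·P1² − c2`, `P1(T) = 𝒫` (with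
`κ > 0`, `c2 ≥ 0`, `𝒫 ≥ 0`, denoted `Pen`) has a unique solution on `[0,T]`, which stays
between `min(𝒫, √(c2/κ))` and `max(𝒫, √(c2/κ))`; in particular it is nonnegative. -/
theorem riccati_P1_exists_unique_bounded (T κ c2 Pen : ℝ)
    (hT : 0 < T) (hκ : 0 < κ) (hc2 : 0 ≤ c2) (hPen : 0 ≤ Pen) :
    ∃ P1 : ℝ → ℝ,
      (∀ t ∈ Set.Icc (0 : ℝ) T, HasDerivAt P1 (κ * P1 t ^ 2 - c2) t) ∧
      P1 T = Pen ∧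
      (∀ t ∈ Set.Icc (0 : ℝ) T,
        min Pen (Real.sqrt (c2 / κ)) ≤ P1 t ∧ P1 t ≤ max Pen (Real.sqrt (c2 / κ))) ∧
      (∀ t ∈ Set.Icc (0 : ℝ) T, 0 ≤ P1 t) ∧
      (∀ Q : ℝ → ℝ,
        (∀ t ∈ Set.Icc (0 : ℝ) T, HasDerivAt Q (κ * Q t ^ 2 - c2) t) → Q T = Pen →
        ∀ t ∈ Set.Icc (0 : ℝ) T, Q t = P1 t) := by
  -- it suffices to build a solution with the bounds; uniqueness follows generically
  suffices h : ∃ P1 : ℝ → ℝ,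
      (∀ t ∈ Set.Icc (0 : ℝ) T, HasDerivAt P1 (κ * P1 t ^ 2 - c2) t) ∧
      P1 T = Pen ∧
      (∀ t ∈ Set.Icc (0 : ℝ) T,
        min Pen (Real.sqrt (c2 / κ)) ≤ P1 t ∧ P1 t ≤ max Pen (Real.sqrt (c2 / κ))) by
    obtain ⟨P1, hderiv, hterm, hbd⟩ := h
    refine ⟨P1, hderiv, hterm, hbd, ?_, ?_⟩
    · intro t ht
      have := (hbd t ht).1
      have h0 : 0 ≤ min Pen (Real.sqrt (c2 / κ)) :=
        le_min hPen (Real.sqrt_nonneg _)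
      linarith
    · intro Q hQd hQT t ht
      exact riccati_unique_aux T κ c2 hκ.le Q P1 hQd hderiv (hQT.trans hterm.symm) ht
  rcases eq_or_lt_of_le hc2 with hc20 | hc2pos
  · -- c2 = 0 : P1 t = Pen / (1 + κ Pen (T - t))
    subst hc20
    have hs0 : Real.sqrt ((0:ℝ) / κ) = 0 := by simp
    refine ⟨fun t => Pen / (1 + κ * Pen * (T - t)), ?_, ?_, ?_⟩
    · intro t ht
      have hDpos : 0 < 1 + κ * Pen * (T - t) := by nlinarith [mul_nonneg (mul_nonneg hκ.le hPen) (sub_nonneg.2 ht.2)]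
      have hD : HasDerivAt (fun t => 1 + κ * Pen * (T - t)) (κ * Pen * (-1)) t := by
        simpa using (((hasDerivAt_id t).const_sub T).const_mul (κ * Pen)).const_add 1
      have := (hasDerivAt_const t Pen).div hD hDpos.ne'
      refine this.congr_deriv ?_
      symm
      field_simp
      ring
    · simp
    · intro t ht
      have hDpos : 0 < 1 + κ * Pen * (T - t) := by nlinarith [mul_nonneg (mul_nonneg hκ.le hPen) (sub_nonneg.2 ht.2)]
      have hD1 : 1 ≤ 1 + κ * Pen * (T - t) := by nlinarith [mul_nonneg (mul_nonneg hκ.le hPen) (sub_nonneg.2 ht.2)]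
      rw [hs0]
      constructor
      · rw [min_eq_right hPen]
        positivity
      · rw [max_eq_left hPen, div_le_iff₀ hDpos]
        nlinarith [mul_nonneg hPen (by linarith : (0:ℝ) ≤ κ * Pen * (T - t))]
  · -- c2 > 0 : hyperbolic solution
    set a : ℝ := Real.sqrt (c2 / κ) with ha
    have ha2 : a ^ 2 = c2 / κ := Real.sq_sqrt (by positivity)
    have hapos : 0 < a := Real.sqrt_pos.2 (by positivity)
    have hc2a : c2 = κ * a ^ 2 := by rw [ha2]; field_simp
    set ω : ℝ := κ * a with hω
    have hωpos : 0 < ω := by positivity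
    set u : ℝ → ℝ := fun t => ω * (T - t) with hu
    have hud : ∀ t, HasDerivAt u (-ω) t := by
      intro t
      simpa using ((hasDerivAt_id t).const_sub T).const_mul ω
    set P : ℝ → ℝ := fun t =>
      a * (Pen * Real.cosh (u t) + a * Real.sinh (u t)) /
        (a * Real.cosh (u t) + Pen * Real.sinh (u t)) with hP
    have hDpos : ∀ t ∈ Set.Icc (0:ℝ) T,
        0 < a * Real.cosh (u t) + Pen * Real.sinh (u t) := by
      intro t ht
      have hu0 : 0 ≤ u t := by
        have := ht.2
        have : 0 ≤ T - t := by linarith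
        positivity
      have hS : 0 ≤ Real.sinh (u t) := Real.sinh_nonneg_iff.2 hu0
      have hC : 1 ≤ Real.cosh (u t) := Real.one_le_cosh _
      nlinarith
    refine ⟨P, ?_, ?_, ?_⟩
    · intro t ht
      have hd := hDpos t ht
      have hN : HasDerivAt (fun t => a * (Pen * Real.cosh (u t) + a * Real.sinh (u t)))
          (a * (Pen * (Real.sinh (u t) * (-ω)) + a * (Real.cosh (u t) * (-ω)))) t :=
        ((((hud t).cosh).const_mul Pen).add (((hud t).sinh).const_mul a)).const_mul a
      have hDd : HasDerivAt (fun t => a * Real.cosh (u t) + Pen * Real.sinh (u t))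
          (a * (Real.sinh (u t) * (-ω)) + Pen * (Real.cosh (u t) * (-ω))) t :=
        (((hud t).cosh).const_mul a).add (((hud t).sinh).const_mul Pen)
      have := hN.div hDd hd.ne'
      refine this.congr_deriv ?_
      symm
      have hcs : Real.cosh (u t) ^ 2 = Real.sinh (u t) ^ 2 + 1 := Real.cosh_sq _
      simp only [hP]
      field_simp
      rw [hω] at *
      nlinarith [hcs, sq_nonneg (a * Real.cosh (u t) + Pen * Real.sinh (u t)), hd]
    · simp only [hP]
      have : u T = 0 := by simp [hu]
      rw [this]
      simp
      field_simp
    · intro t ht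
      have hd := hDpos t ht
      have hu0 : 0 ≤ u t := by
        have : 0 ≤ T - t := by linarith [ht.2]
        positivity
      have hS : 0 ≤ Real.sinh (u t) := Real.sinh_nonneg_iff.2 hu0
      have hC : 1 ≤ Real.cosh (u t) := Real.one_le_cosh _
      have hCS : Real.sinh (u t) < Real.cosh (u t) := by
        nlinarith [Real.exp_pos (-(u t)), Real.cosh_sub_sinh (u t)]
      simp only [hP]
      constructor
      · rcases le_total Pen a with hpa | hpa
        · rw [min_eq_left hpa, le_div_iff₀ hd]
          nlinarith [mul_nonneg hS (mul_nonneg (sub_nonneg.2 hpa)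
            (by linarith : (0:ℝ) ≤ a + Pen))]
        · rw [min_eq_right hpa, le_div_iff₀ hd]
          nlinarith [mul_nonneg (mul_nonneg hapos.le (sub_nonneg.2 hpa))
            (by linarith : (0:ℝ) ≤ Real.cosh (u t) - Real.sinh (u t))]
      · rcases le_total Pen a with hpa | hpa
        · rw [max_eq_right hpa, div_le_iff₀ hd]
          nlinarith [mul_nonneg (mul_nonneg hapos.le (sub_nonneg.2 hpa))
            (by linarith : (0:ℝ) ≤ Real.cosh (u t) - Real.sinh (u t))]
        · rw [max_eq_left hpa, div_le_iff₀ hd]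
          nlinarith [mul_nonneg hS (mul_nonneg (sub_nonneg.2 hpa)
            (by linarith : (0:ℝ) ≤ a + Pen))]
end

section
/- Let T > 0, c1 > 0, κ = 1/(1+c1), c2 ≥ 0, 𝒫 ≥ 0, and fix m, Im, ι_target, X_max ∈ ℝ. Let α, σ, M : [0,T] → ℝ be continuous. Then the backward system of ODEs on [0,T] — P1' + c2 − κP1^2 = 0 with P1(T) = 𝒫; P2' − αP2 − κP1P2 + 2κP1 = 0 with P2(T) = 0; P3' + (1−κ) − (2α + σ^2)P3 + κP2 − (κ/4)P2^2 = 0 with P3(T) = 0; P4' + 2κ(m − M)P1 − κP1P4 = 0 with P4(T) = 2𝒫(Im − ι_target); P5' + 2(1−κ)(m − M) − αP5 + κP4 + κ(m − M)P2 − (κ/2)P2P4 + σ^2(X_max − 2m)P3 = 0 with P5(T) = 0; P6' + (1−κ)(m − M)^2 + κ(m − M)P4 − (κ/4)P4^2 + σ^2·m·(X_max − m)·P3 = 0 with P6(T) = 𝒫(Im − ι_target)^2 — admits a unique continuously differentiable solution (P1,…,P6) on all of [0,T]. -/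
open Set Real intervalIntegral

/-! ### Auxiliary lemmas -/

/-- Clamping projection onto `[0, T]`. -/
noncomputable def rsProj (T t : ℝ) : ℝ := max 0 (min t T)

lemma rsProj_mem {T : ℝ} (hT : 0 ≤ T) (t : ℝ) : rsProj T t ∈ Set.Icc 0 T := by
  constructor
  · exact le_max_left _ _
  · exact max_le hT (min_le_right _ _)

lemma rsProj_eq {T t : ℝ} (ht : t ∈ Set.Icc 0 T) : rsProj T t = t := by
  have h1 : min t T = t := min_eq_left ht.2
  simp [rsProj, h1, ht.1]

lemma rsProj_continuous (T : ℝ) : Continuous (rsProj T) :=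
  continuous_const.max (continuous_id.min continuous_const)

lemma rsClamp_continuous {T : ℝ} (hT : 0 ≤ T) {f : ℝ → ℝ}
    (hf : ContinuousOn f (Set.Icc 0 T)) : Continuous (fun t => f (rsProj T t)) :=
  hf.comp_continuous (rsProj_continuous T) (rsProj_mem hT)

/-- FTC: the integral of a continuous function has derivative everywhere. -/
lemma rsFtc {f : ℝ → ℝ} (hf : Continuous f) (a t : ℝ) :
    HasDerivAt (fun u => ∫ x in a..u, f x) (f t) t :=
  intervalIntegral.integral_hasDerivAt_right (hf.intervalIntegrable a t)
    (hf.stronglyMeasurableAtFilter _ _) hf.continuousAt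

/-- Existence of a global solution for a linear ODE `y' = b t * y + c t`, `y T = yT`,
with globally continuous coefficients. -/
lemma linODE_exists (T yT : ℝ) (b c : ℝ → ℝ) (hb : Continuous b) (hc : Continuous c) :
    ∃ y : ℝ → ℝ, (∀ t, HasDerivAt y (b t * y t + c t) t) ∧ y T = yT := by
  set A : ℝ → ℝ := fun t => ∫ s in T..t, b s with hA_def
  have hA : ∀ t, HasDerivAt A (b t) t := fun t => rsFtc hb T t
  have hA_cont : Continuous A := by
    apply continuous_iff_continuousAt.2
    exact fun t => (hA t).continuousAt
  have hInt_cont : Continuous (fun s => Real.exp (-A s) * c s) :=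
    ((hA_cont.neg).rexp).mul hc
  set y : ℝ → ℝ := fun t => Real.exp (A t) * (yT + ∫ s in T..t, Real.exp (-A s) * c s)
    with hy_def
  refine ⟨y, ?_, ?_⟩
  · intro t
    have h1 : HasDerivAt (fun t => Real.exp (A t)) (Real.exp (A t) * b t) t := (hA t).exp
    have h2 : HasDerivAt (fun t => yT + ∫ s in T..t, Real.exp (-A s) * c s)
        (Real.exp (-A t) * c t) t := (rsFtc hInt_cont T t).const_add yT
    have h3 := h1.mul h2
    have heq : Real.exp (A t) * b t * (yT + ∫ s in T..t, Real.exp (-A s) * c s) +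
        Real.exp (A t) * (Real.exp (-A t) * c t) = b t * y t + c t := by
      have : Real.exp (A t) * Real.exp (-A t) = 1 := by
        rw [← Real.exp_add]; simp
      simp only [hy_def]
      rw [← mul_assoc, this]; ring
    exact heq ▸ h3
  · simp [hy_def, hA_def, intervalIntegral.integral_same]

/-- Continuity on `[0,T]` from differentiability on `[0,T]`. -/
lemma contOn_of_hasDerivAt {T : ℝ} {f f' : ℝ → ℝ}
    (hf : ∀ t ∈ Set.Icc (0:ℝ) T, HasDerivAt f (f' t) t) :
    ContinuousOn f (Set.Icc 0 T) :=
  fun t ht => (hf t ht).continuousAt.continuousWithinAt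

/-- Backward uniqueness for the linear ODE `y' = b t * y + c t` on `[0, T]`. -/
lemma linODE_uniq {T : ℝ} (hT : 0 ≤ T) (b c f g : ℝ → ℝ)
    (hb : ContinuousOn b (Set.Icc 0 T))
    (hf : ∀ t ∈ Set.Icc (0:ℝ) T, HasDerivAt f (b t * f t + c t) t)
    (hg : ∀ t ∈ Set.Icc (0:ℝ) T, HasDerivAt g (b t * g t + c t) t)
    (hend : f T = g T) : ∀ t ∈ Set.Icc (0:ℝ) T, f t = g t := by
  obtain ⟨B, hB⟩ := isCompact_Icc.exists_bound_of_continuousOn hb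
  set K : NNReal := Real.toNNReal B with hK
  set v : ℝ → ℝ → ℝ := fun t y => b (rsProj T t) * y + c t with hv_def
  have hv : ∀ t, LipschitzOnWith K (v t) Set.univ := by
    intro t
    apply LipschitzWith.lipschitzOnWith
    apply LipschitzWith.of_dist_le_mul
    intro x y
    simp only [hv_def, Real.dist_eq]
    have h1 : b (rsProj T t) * x + c t - (b (rsProj T t) * y + c t)
        = b (rsProj T t) * (x - y) := by ring
    rw [h1, abs_mul]
    have h2 : |b (rsProj T t)| ≤ (K : ℝ) := by
      rw [hK, Real.coe_toNNReal']
      exact le_max_of_le_left (by simpa using hB _ (rsProj_mem hT t))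
    exact mul_le_mul_of_nonneg_right h2 (abs_nonneg _)
  have hderiv : ∀ (h : ℝ → ℝ), (∀ t ∈ Set.Icc (0:ℝ) T, HasDerivAt h (b t * h t + c t) t) →
      ∀ t ∈ Set.Ioc (0:ℝ) T, HasDerivWithinAt h (v t (h t)) (Set.Iic t) t := by
    intro h hh t ht
    have ht' : t ∈ Set.Icc (0:ℝ) T := Set.Ioc_subset_Icc_self ht
    have : v t (h t) = b t * h t + c t := by
      simp only [hv_def]
      rw [rsProj_eq ht']
    rw [this]
    exact (hh t ht').hasDerivWithinAt
  exact fun t ht =>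
    ODE_solution_unique_of_mem_Icc_left (fun t _ => hv t) (contOn_of_hasDerivAt hf) (hderiv f hf)
      (fun _ _ => Set.mem_univ _) (contOn_of_hasDerivAt hg) (hderiv g hg)
      (fun _ _ => Set.mem_univ _) hend ht

/-- Existence of the solution of the scalar Riccati equation `P' = κ P² − c2`, `P T = Pen`,
on `[0, T]`. -/
lemma riccati_exists {T κ c2 Pen : ℝ} (hT : 0 ≤ T) (hκ : 0 < κ) (hc2 : 0 ≤ c2)
    (hPen : 0 ≤ Pen) :
    ∃ P : ℝ → ℝ, (∀ t ∈ Set.Icc (0:ℝ) T, HasDerivAt P (κ * P t ^ 2 - c2) t) ∧ P T = Pen := by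
  rcases eq_or_lt_of_le hc2 with hc20 | hc2pos
  · -- c2 = 0 : P t = Pen / (1 + κ Pen (T − t))
    refine ⟨fun t => Pen / (1 + κ * Pen * (T - t)), ?_, ?_⟩
    · intro t ht
      have hD : (0:ℝ) < 1 + κ * Pen * (T - t) := by
        have : 0 ≤ κ * Pen * (T - t) := by
          apply mul_nonneg (mul_nonneg hκ.le hPen)
          linarith [ht.2]
        linarith
      have hDd : HasDerivAt (fun t => 1 + κ * Pen * (T - t)) (κ * Pen * (-1)) t := by
        have := ((hasDerivAt_id t).const_sub T).const_mul (κ * Pen)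
        exact this.const_add 1
      have h := (hasDerivAt_const t Pen).div hDd hD.ne'
      have heq : (0 * (1 + κ * Pen * (T - t)) - Pen * (κ * Pen * (-1)))
          / (1 + κ * Pen * (T - t)) ^ 2
          = κ * (Pen / (1 + κ * Pen * (T - t))) ^ 2 - c2 := by
        rw [← hc20]; field_simp; ring
      exact heq ▸ h
    · simp
  · -- c2 > 0
    set l : ℝ := Real.sqrt (κ * c2) with hl_def
    have hl2 : l ^ 2 = κ * c2 := Real.sq_sqrt (by positivity)
    have hlpos : 0 < l := Real.sqrt_pos.2 (by positivity)
    set a : ℝ := l / κ with ha_def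
    have hapos : 0 < a := div_pos hlpos hκ
    set S : ℝ → ℝ := fun t => Real.sinh (l * (T - t)) with hS_def
    set C : ℝ → ℝ := fun t => Real.cosh (l * (T - t)) with hC_def
    refine ⟨fun t => a * (a * S t + Pen * C t) / (a * C t + Pen * S t), ?_, ?_⟩
    · intro t ht
      have hθpos : 0 ≤ l * (T - t) := by
        apply mul_nonneg hlpos.le; linarith [ht.2]
      have hCpos : (1:ℝ) ≤ C t := Real.one_le_cosh _
      have hSpos : 0 ≤ S t := Real.sinh_nonneg_iff.2 hθpos
      have hDpos : 0 < a * C t + Pen * S t := by nlinarith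
      have hθd : HasDerivAt (fun t => l * (T - t)) (l * (-1)) t :=
        ((hasDerivAt_id t).const_sub T).const_mul l
      have hSd : HasDerivAt S (C t * (l * (-1))) t := hθd.sinh
      have hCd : HasDerivAt C (S t * (l * (-1))) t := hθd.cosh
      have hNd : HasDerivAt (fun t => a * (a * S t + Pen * C t))
          (a * (a * (C t * (l * (-1))) + Pen * (S t * (l * (-1))))) t :=
        ((hSd.const_mul a).add (hCd.const_mul Pen)).const_mul a
      have hDd : HasDerivAt (fun t => a * C t + Pen * S t)
          (a * (S t * (l * (-1))) + Pen * (C t * (l * (-1)))) t :=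
        (hCd.const_mul a).add (hSd.const_mul Pen)
      have h := hNd.div hDd hDpos.ne'
      have hκ' : κ ≠ 0 := hκ.ne'
      have hla : l = κ * a := by rw [ha_def]; field_simp
      have ha2 : κ * a ^ 2 = c2 := by
        rw [ha_def]; field_simp; linear_combination hl2
      have h2 : (κ * (a * (a * S t + Pen * C t) / (a * C t + Pen * S t)) ^ 2 - c2)
            * (a * C t + Pen * S t) ^ 2
          = κ * (a * (a * S t + Pen * C t)) ^ 2 - c2 * (a * C t + Pen * S t) ^ 2 := by
        field_simp
      have heq : (a * (a * (C t * (l * (-1))) + Pen * (S t * (l * (-1)))) *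
              (a * C t + Pen * S t) -
            a * (a * S t + Pen * C t) *
              (a * (S t * (l * (-1))) + Pen * (C t * (l * (-1))))) /
            (a * C t + Pen * S t) ^ 2
          = κ * (a * (a * S t + Pen * C t) / (a * C t + Pen * S t)) ^ 2 - c2 := by
        rw [div_eq_iff (pow_ne_zero 2 hDpos.ne'), hla, h2]
        linear_combination (-((a * C t + Pen * S t) ^ 2)) * ha2
      exact heq ▸ h
    · have : l * (T - T) = 0 := by ring
      simp [hS_def, hC_def, this, Real.sinh_zero, Real.cosh_zero, hapos.ne']

/-- The backward Riccati ODE system of Proposition 1 (with terminal penalty weight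
`Pen = 𝒫` and terminal SoC target `ιt`). Solutions are automatically continuously
differentiable since the right-hand sides are continuous. -/
def RiccatiSystem (T m Im ιt Xmax κ c2 Pen : ℝ) (α σ M : ℝ → ℝ)
    (P1 P2 P3 P4 P5 P6 : ℝ → ℝ) : Prop :=
  (∀ t ∈ Set.Icc (0 : ℝ) T, HasDerivAt P1 (κ * P1 t ^ 2 - c2) t) ∧ P1 T = Pen ∧
  (∀ t ∈ Set.Icc (0 : ℝ) T,
    HasDerivAt P2 (α t * P2 t + κ * P1 t * P2 t - 2 * κ * P1 t) t) ∧ P2 T = 0 ∧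
  (∀ t ∈ Set.Icc (0 : ℝ) T,
    HasDerivAt P3 (-(1 - κ) + (2 * α t + σ t ^ 2) * P3 t - κ * P2 t + κ / 4 * P2 t ^ 2) t) ∧
  P3 T = 0 ∧
  (∀ t ∈ Set.Icc (0 : ℝ) T,
    HasDerivAt P4 (-(2 * κ * (m - M t) * P1 t) + κ * P1 t * P4 t) t) ∧
  P4 T = 2 * Pen * (Im - ιt) ∧
  (∀ t ∈ Set.Icc (0 : ℝ) T,
    HasDerivAt P5 (-(2 * (1 - κ) * (m - M t)) + α t * P5 t - κ * P4 t
      - κ * (m - M t) * P2 t + κ / 2 * P2 t * P4 t - σ t ^ 2 * (Xmax - 2 * m) * P3 t) t) ∧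
  P5 T = 0 ∧
  (∀ t ∈ Set.Icc (0 : ℝ) T,
    HasDerivAt P6 (-((1 - κ) * (m - M t) ^ 2) - κ * (m - M t) * P4 t + κ / 4 * P4 t ^ 2
      - σ t ^ 2 * m * (Xmax - m) * P3 t) t) ∧
  P6 T = Pen * (Im - ιt) ^ 2

/-- Resolvability of the backward Riccati system of Proposition 1: for continuous
coefficients `α, σ, M` the system admits a unique (continuously differentiable)
solution `(P1,…,P6)` on all of `[0,T]`. -/
theorem riccati_system_exists_unique (T c1 κ c2 Pen m Im ιt Xmax : ℝ)
    (hT : 0 < T) (hc1 : 0 < c1) (hκ : κ = 1 / (1 + c1)) (hc2 : 0 ≤ c2) (hPen : 0 ≤ Pen)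
    (α σ M : ℝ → ℝ)
    (hα : ContinuousOn α (Set.Icc 0 T)) (hσ : ContinuousOn σ (Set.Icc 0 T))
    (hM : ContinuousOn M (Set.Icc 0 T)) :
    ∃ P1 P2 P3 P4 P5 P6 : ℝ → ℝ,
      RiccatiSystem T m Im ιt Xmax κ c2 Pen α σ M P1 P2 P3 P4 P5 P6 ∧
      ∀ Q1 Q2 Q3 Q4 Q5 Q6 : ℝ → ℝ,
        RiccatiSystem T m Im ιt Xmax κ c2 Pen α σ M Q1 Q2 Q3 Q4 Q5 Q6 →
        ∀ t ∈ Set.Icc (0 : ℝ) T,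
          Q1 t = P1 t ∧ Q2 t = P2 t ∧ Q3 t = P3 t ∧
          Q4 t = P4 t ∧ Q5 t = P5 t ∧ Q6 t = P6 t := by
  have hT' : (0:ℝ) ≤ T := hT.le
  have hκpos : 0 < κ := by rw [hκ]; positivity
  -- clamped coefficients
  set αc : ℝ → ℝ := fun t => α (rsProj T t) with hαc_def
  set σc : ℝ → ℝ := fun t => σ (rsProj T t) with hσc_def
  set Mc : ℝ → ℝ := fun t => M (rsProj T t) with hMc_def
  have hαcc : Continuous αc := rsClamp_continuous hT' hα
  have hσcc : Continuous σc := rsClamp_continuous hT' hσ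
  have hMcc : Continuous Mc := rsClamp_continuous hT' hM
  have hαce : ∀ t ∈ Set.Icc (0:ℝ) T, αc t = α t := fun t ht => congrArg α (rsProj_eq ht)
  have hσce : ∀ t ∈ Set.Icc (0:ℝ) T, σc t = σ t := fun t ht => congrArg σ (rsProj_eq ht)
  have hMce : ∀ t ∈ Set.Icc (0:ℝ) T, Mc t = M t := fun t ht => congrArg M (rsProj_eq ht)
  -- P1
  obtain ⟨P1, hP1d, hP1T⟩ := riccati_exists hT' hκpos hc2 hPen
  set P1c : ℝ → ℝ := fun t => P1 (rsProj T t) with hP1c_def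
  have hP1cc : Continuous P1c := rsClamp_continuous hT' (contOn_of_hasDerivAt hP1d)
  have hP1ce : ∀ t ∈ Set.Icc (0:ℝ) T, P1c t = P1 t := fun t ht => congrArg P1 (rsProj_eq ht)
  -- P2
  obtain ⟨P2, hP2d, hP2T⟩ := linODE_exists T 0 (fun t => αc t + κ * P1c t)
    (fun t => -(2 * κ) * P1c t) (hαcc.add (continuous_const.mul hP1cc))
    (continuous_const.mul hP1cc)
  have hP2c : Continuous P2 := continuous_iff_continuousAt.2 fun t => (hP2d t).continuousAt
  -- P3
  obtain ⟨P3, hP3d, hP3T⟩ := linODE_exists T 0 (fun t => 2 * αc t + σc t ^ 2)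
    (fun t => -(1 - κ) - κ * P2 t + κ / 4 * P2 t ^ 2)
    ((continuous_const.mul hαcc).add (hσcc.pow 2))
    ((continuous_const.sub (continuous_const.mul hP2c)).add
      (continuous_const.mul (hP2c.pow 2)))
  have hP3c : Continuous P3 := continuous_iff_continuousAt.2 fun t => (hP3d t).continuousAt
  -- P4
  obtain ⟨P4, hP4d, hP4T⟩ := linODE_exists T (2 * Pen * (Im - ιt)) (fun t => κ * P1c t)
    (fun t => -(2 * κ) * (m - Mc t) * P1c t) (continuous_const.mul hP1cc)
    (((continuous_const.mul (continuous_const.sub hMcc)).mul hP1cc))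
  have hP4c : Continuous P4 := continuous_iff_continuousAt.2 fun t => (hP4d t).continuousAt
  -- P5
  obtain ⟨P5, hP5d, hP5T⟩ := linODE_exists T 0 αc
    (fun t => -(2 * (1 - κ)) * (m - Mc t) - κ * P4 t - κ * (m - Mc t) * P2 t
      + κ / 2 * P2 t * P4 t - σc t ^ 2 * (Xmax - 2 * m) * P3 t) hαcc
    (by
      apply Continuous.sub
      apply Continuous.add
      apply Continuous.sub
      apply Continuous.sub
      · exact continuous_const.mul (continuous_const.sub hMcc)
      · exact continuous_const.mul hP4c
      · exact (continuous_const.mul (continuous_const.sub hMcc)).mul hP2c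
      · exact (continuous_const.mul hP2c).mul hP4c
      · exact ((hσcc.pow 2).mul continuous_const).mul hP3c)
  -- P6
  obtain ⟨P6, hP6d, hP6T⟩ := linODE_exists T (Pen * (Im - ιt) ^ 2) (fun _ => (0:ℝ))
    (fun t => -((1 - κ) * (m - Mc t) ^ 2) - κ * (m - Mc t) * P4 t + κ / 4 * P4 t ^ 2
      - σc t ^ 2 * m * (Xmax - m) * P3 t) continuous_const
    (by
      apply Continuous.sub
      apply Continuous.add
      apply Continuous.sub
      · exact (continuous_const.mul ((continuous_const.sub hMcc).pow 2)).neg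
      · exact (continuous_const.mul (continuous_const.sub hMcc)).mul hP4c
      · exact continuous_const.mul (hP4c.pow 2)
      · exact (((hσcc.pow 2).mul continuous_const).mul continuous_const).mul hP3c)
  refine ⟨P1, P2, P3, P4, P5, P6, ⟨hP1d, hP1T, ?_, hP2T, ?_, hP3T, ?_, hP4T, ?_, hP5T, ?_,
    hP6T⟩, ?_⟩
  · -- P2 equation
    intro t ht
    have h := hP2d t
    have e : (αc t + κ * P1c t) * P2 t + -(2 * κ) * P1c t
        = α t * P2 t + κ * P1 t * P2 t - 2 * κ * P1 t := by
      rw [hαce t ht, hP1ce t ht]; ring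
    exact e ▸ h
  · -- P3 equation
    intro t ht
    have h := hP3d t
    have e : (2 * αc t + σc t ^ 2) * P3 t + (-(1 - κ) - κ * P2 t + κ / 4 * P2 t ^ 2)
        = -(1 - κ) + (2 * α t + σ t ^ 2) * P3 t - κ * P2 t + κ / 4 * P2 t ^ 2 := by
      rw [hαce t ht, hσce t ht]; ring
    exact e ▸ h
  · -- P4 equation
    intro t ht
    have h := hP4d t
    have e : κ * P1c t * P4 t + -(2 * κ) * (m - Mc t) * P1c t
        = -(2 * κ * (m - M t) * P1 t) + κ * P1 t * P4 t := by
      rw [hP1ce t ht, hMce t ht]; ring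
    exact e ▸ h
  · -- P5 equation
    intro t ht
    have h := hP5d t
    have e : αc t * P5 t + (-(2 * (1 - κ)) * (m - Mc t) - κ * P4 t - κ * (m - Mc t) * P2 t
          + κ / 2 * P2 t * P4 t - σc t ^ 2 * (Xmax - 2 * m) * P3 t)
        = -(2 * (1 - κ) * (m - M t)) + α t * P5 t - κ * P4 t - κ * (m - M t) * P2 t
          + κ / 2 * P2 t * P4 t - σ t ^ 2 * (Xmax - 2 * m) * P3 t := by
      rw [hαce t ht, hMce t ht, hσce t ht]; ring
    exact e ▸ h
  · -- P6 equation
    intro t ht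
    have h := hP6d t
    have e : (0:ℝ) * P6 t + (-((1 - κ) * (m - Mc t) ^ 2) - κ * (m - Mc t) * P4 t
          + κ / 4 * P4 t ^ 2 - σc t ^ 2 * m * (Xmax - m) * P3 t)
        = -((1 - κ) * (m - M t) ^ 2) - κ * (m - M t) * P4 t + κ / 4 * P4 t ^ 2
          - σ t ^ 2 * m * (Xmax - m) * P3 t := by
      rw [hMce t ht, hσce t ht]; ring
    exact e ▸ h
  · -- uniqueness
    intro Q1 Q2 Q3 Q4 Q5 Q6 hQ
    obtain ⟨hQ1d, hQ1T, hQ2d, hQ2T, hQ3d, hQ3T, hQ4d, hQ4T, hQ5d, hQ5T, hQ6d, hQ6T⟩ := hQ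
    have hQ1cont := contOn_of_hasDerivAt hQ1d
    have hP1cont := contOn_of_hasDerivAt hP1d
    -- Q1 = P1
    have e1 : ∀ s ∈ Set.Icc (0:ℝ) T, Q1 s = P1 s := by
      have key := linODE_uniq hT' (fun s => κ * (Q1 s + P1 s)) (fun _ => 0)
        (fun s => Q1 s - P1 s) (fun _ => 0)
        (continuousOn_const.mul (hQ1cont.add hP1cont))
        (fun s hs => by
          have h := (hQ1d s hs).sub (hP1d s hs)
          have e : κ * Q1 s ^ 2 - c2 - (κ * P1 s ^ 2 - c2)
              = κ * (Q1 s + P1 s) * (Q1 s - P1 s) + 0 := by ring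
          exact e ▸ h)
        (fun s hs => by simpa using hasDerivAt_const s (0:ℝ))
        (by simp [hQ1T, hP1T])
      intro s hs
      have h0 := key s hs
      simpa [sub_eq_zero] using h0
    -- Q2 = P2
    have e2 : ∀ s ∈ Set.Icc (0:ℝ) T, Q2 s = P2 s := by
      refine linODE_uniq hT' (fun s => α s + κ * P1 s) (fun s => -(2 * κ) * P1 s) Q2 P2
        (hα.add (continuousOn_const.mul hP1cont)) ?_ ?_ (by rw [hQ2T, hP2T])
      · intro s hs
        have h := hQ2d s hs
        have e : α s * Q2 s + κ * Q1 s * Q2 s - 2 * κ * Q1 s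
            = (α s + κ * P1 s) * Q2 s + -(2 * κ) * P1 s := by rw [e1 s hs]; ring
        exact e ▸ h
      · intro s hs
        have h := hP2d s
        have e : (αc s + κ * P1c s) * P2 s + -(2 * κ) * P1c s
            = (α s + κ * P1 s) * P2 s + -(2 * κ) * P1 s := by
          rw [hαce s hs, hP1ce s hs]
        exact e ▸ h
    -- Q3 = P3
    have e3 : ∀ s ∈ Set.Icc (0:ℝ) T, Q3 s = P3 s := by
      refine linODE_uniq hT' (fun s => 2 * α s + σ s ^ 2)
        (fun s => -(1 - κ) - κ * P2 s + κ / 4 * P2 s ^ 2) Q3 P3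
        ((continuousOn_const.mul hα).add (hσ.pow 2)) ?_ ?_ (by rw [hQ3T, hP3T])
      · intro s hs
        have h := hQ3d s hs
        have e : -(1 - κ) + (2 * α s + σ s ^ 2) * Q3 s - κ * Q2 s + κ / 4 * Q2 s ^ 2
            = (2 * α s + σ s ^ 2) * Q3 s + (-(1 - κ) - κ * P2 s + κ / 4 * P2 s ^ 2) := by
          rw [e2 s hs]; ring
        exact e ▸ h
      · intro s hs
        have h := hP3d s
        have e : (2 * αc s + σc s ^ 2) * P3 s + (-(1 - κ) - κ * P2 s + κ / 4 * P2 s ^ 2)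
            = (2 * α s + σ s ^ 2) * P3 s + (-(1 - κ) - κ * P2 s + κ / 4 * P2 s ^ 2) := by
          rw [hαce s hs, hσce s hs]
        exact e ▸ h
    -- Q4 = P4
    have e4 : ∀ s ∈ Set.Icc (0:ℝ) T, Q4 s = P4 s := by
      refine linODE_uniq hT' (fun s => κ * P1 s)
        (fun s => -(2 * κ) * (m - M s) * P1 s) Q4 P4
        (continuousOn_const.mul hP1cont) ?_ ?_ (by rw [hQ4T, hP4T])
      · intro s hs
        have h := hQ4d s hs
        have e : -(2 * κ * (m - M s) * Q1 s) + κ * Q1 s * Q4 s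
            = κ * P1 s * Q4 s + -(2 * κ) * (m - M s) * P1 s := by rw [e1 s hs]; ring
        exact e ▸ h
      · intro s hs
        have h := hP4d s
        have e : κ * P1c s * P4 s + -(2 * κ) * (m - Mc s) * P1c s
            = κ * P1 s * P4 s + -(2 * κ) * (m - M s) * P1 s := by
          rw [hP1ce s hs, hMce s hs]
        exact e ▸ h
    -- Q5 = P5
    have e5 : ∀ s ∈ Set.Icc (0:ℝ) T, Q5 s = P5 s := by
      refine linODE_uniq hT' α
        (fun s => -(2 * (1 - κ)) * (m - M s) - κ * P4 s - κ * (m - M s) * P2 s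
          + κ / 2 * P2 s * P4 s - σ s ^ 2 * (Xmax - 2 * m) * P3 s) Q5 P5
        hα ?_ ?_ (by rw [hQ5T, hP5T])
      · intro s hs
        have h := hQ5d s hs
        have e : -(2 * (1 - κ) * (m - M s)) + α s * Q5 s - κ * Q4 s - κ * (m - M s) * Q2 s
              + κ / 2 * Q2 s * Q4 s - σ s ^ 2 * (Xmax - 2 * m) * Q3 s
            = α s * Q5 s + (-(2 * (1 - κ)) * (m - M s) - κ * P4 s - κ * (m - M s) * P2 s
              + κ / 2 * P2 s * P4 s - σ s ^ 2 * (Xmax - 2 * m) * P3 s) := by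
          rw [e2 s hs, e3 s hs, e4 s hs]; ring
        exact e ▸ h
      · intro s hs
        have h := hP5d s
        have e : αc s * P5 s + (-(2 * (1 - κ)) * (m - Mc s) - κ * P4 s - κ * (m - Mc s) * P2 s
              + κ / 2 * P2 s * P4 s - σc s ^ 2 * (Xmax - 2 * m) * P3 s)
            = α s * P5 s + (-(2 * (1 - κ)) * (m - M s) - κ * P4 s - κ * (m - M s) * P2 s
              + κ / 2 * P2 s * P4 s - σ s ^ 2 * (Xmax - 2 * m) * P3 s) := by
          rw [hαce s hs, hMce s hs, hσce s hs]
        exact e ▸ h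
    -- Q6 = P6
    have e6 : ∀ s ∈ Set.Icc (0:ℝ) T, Q6 s = P6 s := by
      refine linODE_uniq hT' (fun _ => (0:ℝ))
        (fun s => -((1 - κ) * (m - M s) ^ 2) - κ * (m - M s) * P4 s + κ / 4 * P4 s ^ 2
          - σ s ^ 2 * m * (Xmax - m) * P3 s) Q6 P6
        continuousOn_const ?_ ?_ (by rw [hQ6T, hP6T])
      · intro s hs
        have h := hQ6d s hs
        have e : -((1 - κ) * (m - M s) ^ 2) - κ * (m - M s) * Q4 s + κ / 4 * Q4 s ^ 2
              - σ s ^ 2 * m * (Xmax - m) * Q3 s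
            = (0:ℝ) * Q6 s + (-((1 - κ) * (m - M s) ^ 2) - κ * (m - M s) * P4 s
              + κ / 4 * P4 s ^ 2 - σ s ^ 2 * m * (Xmax - m) * P3 s) := by
          rw [e3 s hs, e4 s hs]; ring
        exact e ▸ h
      · intro s hs
        have h := hP6d s
        have e : (0:ℝ) * P6 s + (-((1 - κ) * (m - Mc s) ^ 2) - κ * (m - Mc s) * P4 s
              + κ / 4 * P4 s ^ 2 - σc s ^ 2 * m * (Xmax - m) * P3 s)
            = (0:ℝ) * P6 s + (-((1 - κ) * (m - M s) ^ 2) - κ * (m - M s) * P4 s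
              + κ / 4 * P4 s ^ 2 - σ s ^ 2 * m * (Xmax - m) * P3 s) := by
          rw [hMce s hs, hσce s hs]
        exact e ▸ h
    exact fun t ht => ⟨e1 t ht, e2 t ht, e3 t ht, e4 t ht, e5 t ht, e6 t ht⟩
end
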